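/- Let a ∈ ℤ^d and let e = (1,…,1) ∈ ℤ^d. Then X^e ∘ (X^{a⁺} ∘ D^{a⁻}) = X^{(a+e)⁺} ∘ D^{(a+e)⁻} ∘ Π_{i : a_i < 0} (θ_i + (a_i + 1)·id) in End_k(P), where the factors θ_i + (a_i+1)·id pairwise commute. (Key computation in the proof of Proposition 3.9 showing x^e is a non-zerodivisor on D_L(b̄).) -/

import Mathlib

open MvPolynomial

noncomputable section

/-- Multiplication by `x i` as a `k`-linear endomorphism of `P = k[x_1,…,x_d]`. -/
def Xop (k : Type) [Field k] (d : ℕ) (i : Fin d) :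
    Module.End k (MvPolynomial (Fin d) k) :=
  LinearMap.mulLeft k (X i)

/-- The partial derivative `∂/∂x_i` as a `k`-linear endomorphism of `P`. -/
def Dop (k : Type) [Field k] (d : ℕ) (i : Fin d) :
    Module.End k (MvPolynomial (Fin d) k) :=
  (pderiv i).toLinearMap

/-- The Euler operator `θ_i = X_i ∘ D_i`. -/
def theta (k : Type) [Field k] (d : ℕ) (i : Fin d) :
    Module.End k (MvPolynomial (Fin d) k) :=
  Xop k d i * Dop k d i

/-- `X^a = X_1^{a_1} ∘ ⋯ ∘ X_d^{a_d}` for `a ∈ ℕ^d`. -/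
def Xpow (k : Type) [Field k] (d : ℕ) (a : Fin d → ℕ) :
    Module.End k (MvPolynomial (Fin d) k) :=
  ((List.finRange d).map fun i => Xop k d i ^ a i).prod

/-- `D^a = D_1^{a_1} ∘ ⋯ ∘ D_d^{a_d}` for `a ∈ ℕ^d`. -/
def Dpow (k : Type) [Field k] (d : ℕ) (a : Fin d → ℕ) :
    Module.End k (MvPolynomial (Fin d) k) :=
  ((List.finRange d).map fun i => Dop k d i ^ a i).prod

variable {k : Type} [Field k] {d : ℕ}

lemma pderiv_comm (i j : Fin d) (p : MvPolynomial (Fin d) k) :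
    pderiv i (pderiv j p) = pderiv j (pderiv i p) := by
  induction p using MvPolynomial.induction_on' with
  | monomial s c =>
    rcases eq_or_ne i j with rfl | h
    · rfl
    · simp [pderiv_monomial, Finsupp.single_apply, h, h.symm, Finsupp.sub_apply,
        tsub_right_comm, mul_right_comm]
  | add p q hp hq => simp [hp, hq]

lemma commDD (i j : Fin d) : Commute (Dop k d i) (Dop k d j) := by
  apply LinearMap.ext
  intro p
  simp only [Module.End.mul_apply, Dop, Derivation.coeFn_coe]
  exact pderiv_comm i j p

lemma commXX (i j : Fin d) : Commute (Xop k d i) (Xop k d j) := by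
  apply LinearMap.ext
  intro p
  simp only [Module.End.mul_apply, Xop, LinearMap.mulLeft_apply]
  ring

lemma commDX {i j : Fin d} (h : i ≠ j) : Commute (Dop k d i) (Xop k d j) := by
  apply LinearMap.ext
  intro p
  simp only [Module.End.mul_apply, Dop, Xop, Derivation.coeFn_coe, LinearMap.mulLeft_apply]
  rw [pderiv_mul, pderiv_X_of_ne h.symm]
  ring

/-- canonical commutation relation -/
lemma DX_eq (i : Fin d) : Dop k d i * Xop k d i = Xop k d i * Dop k d i + 1 := by
  apply LinearMap.ext
  intro p
  simp only [Module.End.mul_apply, LinearMap.add_apply, Module.End.one_apply, Dop, Xop,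
    Derivation.coeFn_coe, LinearMap.mulLeft_apply]
  rw [pderiv_mul, pderiv_X_self]
  ring

lemma Dpow_X (i : Fin d) (n : ℕ) :
    Dop k d i ^ n * Xop k d i = Xop k d i * Dop k d i ^ n + n • Dop k d i ^ (n - 1) := by
  induction n with
  | zero => simp
  | succ n ih =>
    rw [pow_succ', mul_assoc, ih, mul_add, ← mul_assoc, DX_eq, add_mul, one_mul,
      mul_assoc, ← pow_succ', mul_smul_comm]
    rcases Nat.eq_zero_or_pos n with rfl | hn
    · simp
    · rw [← pow_succ', Nat.sub_add_cancel hn, Nat.succ_sub_one, succ_nsmul]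
      abel

/-- mixed commuting: `X_i^p D_i^m` commutes with `X_j^{p'} D_j^{m'}` for `i ≠ j`. -/
lemma commMixed {i j : Fin d} (h : i ≠ j) (p m p' m' : ℕ) :
    Commute (Xop k d i ^ p * Dop k d i ^ m) (Xop k d j ^ p' * Dop k d j ^ m') := by
  have hxx := (commXX (k := k) (d := d) i j).pow_pow p p'
  have hxd := ((commDX (k := k) (d := d) h.symm).symm).pow_pow p m'
  have hdx := (commDX (k := k) (d := d) h).pow_pow m p'
  have hdd := (commDD (k := k) (d := d) i j).pow_pow m m'
  exact Commute.mul_left (hxx.mul_right hxd) (hdx.mul_right hdd)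

lemma commMixedX {i j : Fin d} (h : i ≠ j) (p m n : ℕ) :
    Commute (Xop k d i ^ p * Dop k d i ^ m) (Xop k d j ^ n) :=
  Commute.mul_left ((commXX i j).pow_pow p n) ((commDX h).pow_pow m n)

lemma commThetaMixed {i j : Fin d} (h : i ≠ j) (c : ℤ) (p m : ℕ) :
    Commute (theta k d i + c • 1) (Xop k d j ^ p * Dop k d j ^ m) := by
  apply Commute.add_left
  · have := commMixed (k := k) (d := d) h 1 1 p m
    simpa [theta] using this
  · rw [zsmul_one]
    exact Int.cast_commute _ _

/-- product of maps lemma -/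
lemma prod_map_mul_prod_map {M : Type*} [Monoid M] {ι : Type*} (f g : ι → M) :
    ∀ l : List ι, l.Nodup →
      (∀ i ∈ l, ∀ j ∈ l, i ≠ j → Commute (g i) (f j)) →
      (l.map f).prod * (l.map g).prod = (l.map fun i => f i * g i).prod := by
  intro l
  induction l with
  | nil => simp
  | cons i t ih =>
    intro hnd hc
    simp only [List.map_cons, List.prod_cons]
    have hcomm : Commute (g i) ((t.map f).prod) := by
      apply Commute.list_prod_right
      intro y hy
      obtain ⟨j, hj, rfl⟩ := List.mem_map.mp hy
      exact hc i List.mem_cons_self j (List.mem_cons_of_mem _ hj)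
        (fun hij => (List.nodup_cons.mp hnd).1 (hij ▸ hj))
    rw [mul_assoc, ← mul_assoc ((t.map f).prod), ← hcomm.eq, mul_assoc, ← mul_assoc,
      ih (List.nodup_cons.mp hnd).2
        (fun x hx y hy hxy => hc x (List.mem_cons_of_mem _ hx) y (List.mem_cons_of_mem _ hy) hxy),
      mul_assoc]

lemma filter_map_prod {M : Type*} [Monoid M] {ι : Type*} (p : ι → Prop) [DecidablePred p]
    (f : ι → M) :
    ∀ l : List ι, ((l.filter fun i => p i).map f).prod
      = (l.map fun i => if p i then f i else 1).prod := by
  intro l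
  induction l with
  | nil => simp
  | cons i t ih =>
    rw [List.filter_cons]
    by_cases h : p i <;> simp [h, ih]

theorem xe_mul_monomial (k : Type) [Field k] [CharZero k] (d : ℕ) (hd : 1 ≤ d)
    (a : Fin d → ℤ) :
    Xpow k d (fun _ => 1)
        * (Xpow k d (fun i => (a i).toNat) * Dpow k d (fun i => (-a i).toNat))
      = Xpow k d (fun i => (a i + 1).toNat) * Dpow k d (fun i => (-(a i + 1)).toNat)
        * (((List.finRange d).filter fun i => a i < 0).map
            fun i => theta k d i + (a i + 1) • 1).prod ∧
    ∀ i j : Fin d, a i < 0 → a j < 0 →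
      Commute (theta k d i + (a i + 1) • (1 : Module.End k (MvPolynomial (Fin d) k)))
        (theta k d j + (a j + 1) • 1) := by
  constructor
  · -- per-index identity
    have key : ∀ i : Fin d,
        Xop k d i ^ 1 * (Xop k d i ^ (a i).toNat * Dop k d i ^ (-a i).toNat)
        = (Xop k d i ^ (a i + 1).toNat * Dop k d i ^ (-(a i + 1)).toNat)
            * (if a i < 0 then theta k d i + (a i + 1) • 1 else 1) := by
      intro i
      by_cases h : a i < 0
      · obtain ⟨n, hn⟩ : ∃ n : ℕ, a i = -((n : ℤ) + 1) := ⟨((-(a i)).toNat - 1), by omega⟩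
        have h1 : (a i).toNat = 0 := by omega
        have h2 : (-a i).toNat = n + 1 := by omega
        have h3 : (a i + 1).toNat = 0 := by omega
        have h4 : (-(a i + 1)).toNat = n := by omega
        have ha : (a i + 1) = -(n : ℤ) := by omega
        rw [h1, h2, h3, h4, if_pos h, ha]
        simp only [pow_zero, pow_one, one_mul]
        rw [theta, mul_add, ← mul_assoc, Dpow_X, add_mul, mul_assoc, ← pow_succ,
      smul_mul_assoc, mul_smul_comm, mul_one]
        rcases Nat.eq_zero_or_pos n with rfl | hn'
        · simp
        · rw [← pow_succ, Nat.sub_add_cancel hn', ← natCast_zsmul,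
            add_assoc, ← add_smul, add_neg_cancel, zero_smul, add_zero]
      · have h1 : (-a i).toNat = 0 := by omega
        have h2 : (-(a i + 1)).toNat = 0 := by omega
        have h3 : (a i + 1).toNat = (a i).toNat + 1 := by omega
        rw [h1, h2, h3, if_neg h]
        simp only [pow_zero, mul_one, pow_one, pow_succ']
    -- assemble
    have hnd := List.nodup_finRange d
    unfold Xpow Dpow
    rw [prod_map_mul_prod_map (fun i => Xop k d i ^ (a i).toNat)
        (fun i => Dop k d i ^ (-a i).toNat) _ hnd
        (fun i _ j _ hij => (commDX hij).pow_pow _ _),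
      prod_map_mul_prod_map (fun i => Xop k d i ^ (1 : ℕ))
        (fun i => Xop k d i ^ (a i).toNat * Dop k d i ^ (-a i).toNat) _ hnd
        (fun i _ j _ hij => commMixedX hij _ _ _),
      prod_map_mul_prod_map (fun i => Xop k d i ^ (a i + 1).toNat)
        (fun i => Dop k d i ^ (-(a i + 1)).toNat) _ hnd
        (fun i _ j _ hij => (commDX hij).pow_pow _ _),
      filter_map_prod (fun i => a i < 0) (fun i => theta k d i + (a i + 1) • 1),
      prod_map_mul_prod_map
        (fun i => Xop k d i ^ (a i + 1).toNat * Dop k d i ^ (-(a i + 1)).toNat)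
        (fun i => if a i < 0 then theta k d i + (a i + 1) • 1 else 1) _ hnd
        (fun i _ j _ hij => by
          by_cases hi : a i < 0
          · rw [if_pos hi]; exact commThetaMixed hij _ _ _
          · rw [if_neg hi]; exact Commute.one_left _)]
    exact congrArg List.prod (List.map_congr_left (fun i _ => key i))
  · intro i j hi hj
    have h1 : Commute (theta k d i) (theta k d j) := by
      rcases eq_or_ne i j with rfl | h
      · exact Commute.refl _
      · have := commMixed (k := k) (d := d) h 1 1 1 1
        simpa [theta] using this
    rw [zsmul_one, zsmul_one]
    exact Commute.add_left (h1.add_right (Int.cast_commute _ _).symm) (Int.cast_commute _ _)
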